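/- Under the hypotheses of the previous statement, any strictly positive ρ-periodic solution of the reduced system satisfies 0 ≤ (1/ρ)∫₀^ρ x₁(s) ds ≤ (δ₄ - 1 + √((1+δ₄)² - 4δ₄δ₂))/(2δ₄). -/

import Mathlib

set_option maxHeartbeats 1000000 in
/-- The mean of x₁ over one period lies between 0 and the larger root
(δ₄ - 1 + √((1+δ₄)² - 4δ₄δ₂))/(2δ₄). -/
theorem reduced_system_periodic_mean_bound
    (β₂ β₄ δ₂ δ₄ ρ : ℝ)
    (hβ₂ : 0 < β₂) (hβ₄ : 0 < β₄) (hδ₂ : 0 < δ₂) (hδ₄ : 0 < δ₄) (hρ : 0 < ρ)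
    (hdisc : δ₂ ≤ (1 + δ₄) ^ 2 / (4 * δ₄))
    (i : ℝ → ℝ) (hi : Continuous i) (hip : Function.Periodic i ρ)
    (hinn : ∀ t, 0 ≤ i t)
    (himean : (1 / ρ) * ∫ t in (0:ℝ)..ρ, i t = 1)
    (x₁ x₂ : ℝ → ℝ)
    (hpos : ∀ t, 0 < x₁ t ∧ 0 < x₂ t)
    (hp₁ : Function.Periodic x₁ ρ) (hp₂ : Function.Periodic x₂ ρ)
    (hx₁ : ∀ t, HasDerivAt x₁ (β₂ * x₁ t * (1 - x₁ t - δ₂ * x₂ t)) t)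
    (hx₂ : ∀ t, HasDerivAt x₂ (β₄ * (i t - x₂ t - δ₄ * x₁ t * x₂ t)) t) :
    0 ≤ (1 / ρ) * ∫ s in (0:ℝ)..ρ, x₁ s ∧
    (1 / ρ) * (∫ s in (0:ℝ)..ρ, x₁ s) ≤
      (δ₄ - 1 + Real.sqrt ((1 + δ₄) ^ 2 - 4 * δ₄ * δ₂)) / (2 * δ₄) := by
  have hρ' : ρ ≠ 0 := ne_of_gt hρ
  have hc1 : Continuous x₁ := continuous_iff_continuousAt.mpr fun t => (hx₁ t).continuousAt
  have hc2 : Continuous x₂ := continuous_iff_continuousAt.mpr fun t => (hx₂ t).continuousAt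
  set A := ∫ s in (0:ℝ)..ρ, x₁ s with hAdef
  set B := ∫ s in (0:ℝ)..ρ, x₂ s with hBdef
  set S := ∫ s in (0:ℝ)..ρ, (x₁ s)^2 with hSdef
  set Q := ∫ s in (0:ℝ)..ρ, x₁ s * x₂ s with hQdef
  have hi1 : IntervalIntegrable x₁ MeasureTheory.volume 0 ρ := hc1.intervalIntegrable 0 ρ
  have hi2 : IntervalIntegrable x₂ MeasureTheory.volume 0 ρ := hc2.intervalIntegrable 0 ρ
  have hiS : IntervalIntegrable (fun t => (x₁ t)^2) MeasureTheory.volume 0 ρ :=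
    (hc1.pow 2).intervalIntegrable 0 ρ
  have hiQ : IntervalIntegrable (fun t => x₁ t * x₂ t) MeasureTheory.volume 0 ρ :=
    (hc1.mul hc2).intervalIntegrable 0 ρ
  have hII : ∫ t in (0:ℝ)..ρ, i t = ρ := by
    field_simp at himean; linarith
  -- nonnegativity of A
  have hA0 : 0 ≤ A := intervalIntegral.integral_nonneg hρ.le (fun t _ => (hpos t).1.le)
  -- identity from log x₁
  have hL : ∀ t, HasDerivAt (fun u => Real.log (x₁ u)) (β₂ * (1 - x₁ t - δ₂ * x₂ t)) t := by
    intro t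
    have hne : x₁ t ≠ 0 := ne_of_gt (hpos t).1
    have h := (hx₁ t).log hne
    convert h using 1
    field_simp
  have key1 : (∫ t in (0:ℝ)..ρ, β₂ * (1 - x₁ t - δ₂ * x₂ t)) = 0 := by
    rw [intervalIntegral.integral_eq_sub_of_hasDerivAt (fun t _ => hL t)
      ((continuous_const.mul ((continuous_const.sub hc1).sub (continuous_const.mul hc2))).intervalIntegrable 0 ρ)]
    rw [show x₁ ρ = x₁ 0 from by simpa using hp₁ 0, sub_self]
  have e1 : ρ - A - δ₂ * B = 0 := by
    have c1 : (∫ t in (0:ℝ)..ρ, β₂ * (1 - x₁ t - δ₂ * x₂ t)) = β₂ * (ρ - A - δ₂ * B) := by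
      rw [intervalIntegral.integral_const_mul]
      congr 1
      rw [intervalIntegral.integral_sub (show IntervalIntegrable (fun t => 1 - x₁ t) MeasureTheory.volume 0 ρ from (continuous_const.sub hc1).intervalIntegrable 0 ρ)
            (show IntervalIntegrable (fun t => δ₂ * x₂ t) MeasureTheory.volume 0 ρ from (continuous_const.mul hc2).intervalIntegrable 0 ρ),
          intervalIntegral.integral_sub (intervalIntegrable_const) hi1,
          intervalIntegral.integral_const, intervalIntegral.integral_const_mul]
      simp [smul_eq_mul]
      rfl
    have := key1
    rw [c1] at this
    rcases mul_eq_zero.mp this with h | h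
    · exact absurd h (ne_of_gt hβ₂)
    · exact h
  -- identity from x₁ itself
  have key2 : (∫ t in (0:ℝ)..ρ, β₂ * x₁ t * (1 - x₁ t - δ₂ * x₂ t)) = 0 := by
    rw [intervalIntegral.integral_eq_sub_of_hasDerivAt (fun t _ => hx₁ t)
      (((continuous_const.mul hc1).mul ((continuous_const.sub hc1).sub (continuous_const.mul hc2))).intervalIntegrable 0 ρ)]
    rw [show x₁ ρ = x₁ 0 from by simpa using hp₁ 0, sub_self]
  have e2 : A - S - δ₂ * Q = 0 := by
    have c2 : (∫ t in (0:ℝ)..ρ, β₂ * x₁ t * (1 - x₁ t - δ₂ * x₂ t))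
        = β₂ * (A - S - δ₂ * Q) := by
      simp_rw [show ∀ t, β₂ * x₁ t * (1 - x₁ t - δ₂ * x₂ t)
          = β₂ * (x₁ t - (x₁ t)^2 - δ₂ * (x₁ t * x₂ t)) from fun t => by ring]
      rw [intervalIntegral.integral_const_mul]
      congr 1
      rw [intervalIntegral.integral_sub (show IntervalIntegrable (fun t => x₁ t - x₁ t ^ 2) MeasureTheory.volume 0 ρ from (hc1.sub (hc1.pow 2)).intervalIntegrable 0 ρ)
            (show IntervalIntegrable (fun t => δ₂ * (x₁ t * x₂ t)) MeasureTheory.volume 0 ρ from (continuous_const.mul (hc1.mul hc2)).intervalIntegrable 0 ρ),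
          intervalIntegral.integral_sub hi1 hiS,
          intervalIntegral.integral_const_mul]
    have := key2
    rw [c2] at this
    rcases mul_eq_zero.mp this with h | h
    · exact absurd h (ne_of_gt hβ₂)
    · exact h
  -- identity from x₂
  have key3 : (∫ t in (0:ℝ)..ρ, β₄ * (i t - x₂ t - δ₄ * x₁ t * x₂ t)) = 0 := by
    rw [intervalIntegral.integral_eq_sub_of_hasDerivAt (fun t _ => hx₂ t)
      ((continuous_const.mul ((hi.sub hc2).sub ((continuous_const.mul hc1).mul hc2))).intervalIntegrable 0 ρ)]
    rw [show x₂ ρ = x₂ 0 from by simpa using hp₂ 0, sub_self]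
  have e3 : ρ - B - δ₄ * Q = 0 := by
    have c3 : (∫ t in (0:ℝ)..ρ, β₄ * (i t - x₂ t - δ₄ * x₁ t * x₂ t))
        = β₄ * (ρ - B - δ₄ * Q) := by
      simp_rw [show ∀ t, β₄ * (i t - x₂ t - δ₄ * x₁ t * x₂ t)
          = β₄ * (i t - x₂ t - δ₄ * (x₁ t * x₂ t)) from fun t => by ring]
      rw [intervalIntegral.integral_const_mul]
      congr 1
      rw [intervalIntegral.integral_sub (show IntervalIntegrable (fun t => i t - x₂ t) MeasureTheory.volume 0 ρ from (hi.sub hc2).intervalIntegrable 0 ρ)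
            (show IntervalIntegrable (fun t => δ₄ * (x₁ t * x₂ t)) MeasureTheory.volume 0 ρ from (continuous_const.mul (hc1.mul hc2)).intervalIntegrable 0 ρ),
          intervalIntegral.integral_sub (hi.intervalIntegrable 0 ρ) hi2,
          intervalIntegral.integral_const_mul, hII]
    have := key3
    rw [c3] at this
    rcases mul_eq_zero.mp this with h | h
    · exact absurd h (ne_of_gt hβ₄)
    · exact h
  -- Cauchy–Schwarz
  have hCS : A^2 ≤ ρ * S := by
    have h0 : (0:ℝ) ≤ ∫ t in (0:ℝ)..ρ, (ρ * x₁ t - A)^2 :=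
      intervalIntegral.integral_nonneg hρ.le (fun t _ => sq_nonneg _)
    have hval : (∫ t in (0:ℝ)..ρ, (ρ * x₁ t - A)^2)
        = ρ^2 * S - 2*ρ*A*A + A^2*ρ := by
      simp_rw [show ∀ t, (ρ * x₁ t - A)^2
          = ρ^2*(x₁ t)^2 - (2*ρ*A)*(x₁ t) + A^2 from fun t => by ring]
      rw [intervalIntegral.integral_add
            (show IntervalIntegrable (fun t => ρ^2*(x₁ t)^2 - (2*ρ*A)*(x₁ t)) MeasureTheory.volume 0 ρ from ((continuous_const.mul (hc1.pow 2)).sub (continuous_const.mul hc1)).intervalIntegrable 0 ρ)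
            intervalIntegrable_const,
          intervalIntegral.integral_sub (show IntervalIntegrable (fun t => ρ^2*(x₁ t)^2) MeasureTheory.volume 0 ρ from (continuous_const.mul (hc1.pow 2)).intervalIntegrable 0 ρ)
            (show IntervalIntegrable (fun t => (2*ρ*A)*(x₁ t)) MeasureTheory.volume 0 ρ from (continuous_const.mul hc1).intervalIntegrable 0 ρ),
          intervalIntegral.integral_const_mul, intervalIntegral.integral_const_mul,
          intervalIntegral.integral_const]
      simp [smul_eq_mul]
      ring
    rw [hval] at h0
    have : ρ * A^2 ≤ ρ * (ρ * S) := by nlinarith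
    exact (mul_le_mul_iff_right₀ hρ).mp this
  -- derive the quadratic inequality
  have hBval : B = ρ - δ₄ * Q := by linarith
  rw [hBval] at e1
  have hSval : S = A - δ₂ * Q := by linarith
  rw [hSval] at hCS
  -- e1 : ρ - A - δ₂ * (ρ - δ₄ * Q) = 0
  have hq : ρ * (δ₂ * (δ₄ * Q)) = ρ * (δ₂ * ρ - ρ + A) := by
    have : δ₂ * (δ₄ * Q) = δ₂ * ρ - ρ + A := by linarith [e1]; 
    rw [this]
  have h1 : δ₄ * A^2 ≤ δ₄ * (ρ * (A - δ₂ * Q)) :=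
    mul_le_mul_of_nonneg_left hCS hδ₄.le
  have quad : δ₄ * A^2 + (1 - δ₄) * ρ * A + (δ₂ - 1) * ρ^2 ≤ 0 := by nlinarith [h1, hq]
  -- finish
  set D := (1 + δ₄)^2 - 4*δ₄*δ₂ with hDdef
  have hD : 0 ≤ D := by
    have h := (div_le_div_iff₀ (by norm_num) (by positivity)).mp
      (by simpa using hdisc : δ₂ / 1 ≤ (1 + δ₄)^2 / (4*δ₄))
    nlinarith [h]
  have hsq : (2*δ₄*A - (δ₄-1)*ρ)^2 ≤ (ρ * Real.sqrt D)^2 := by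
    have hs : (Real.sqrt D)^2 = D := Real.sq_sqrt hD
    nlinarith [quad, hs, sq_nonneg ρ]
  have ht : 2*δ₄*A - (δ₄-1)*ρ ≤ ρ * Real.sqrt D := by
    have hsn : 0 ≤ ρ * Real.sqrt D := mul_nonneg hρ.le (Real.sqrt_nonneg D)
    nlinarith [hsq, hsn]
  constructor
  · exact mul_nonneg (by positivity) hA0
  · rw [one_div, inv_mul_eq_div, div_le_div_iff₀ hρ (by positivity)]
    linarith [ht]
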